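/- Let f, g ∈ L^∞. Then the singular integral operator S_{f,g} is normal (S_{f,g}S*_{f,g} = S*_{f,g}S_{f,g}) if and only if one of the following holds: (1) f and g are constant; (2) there exists a unimodular constant λ such that f − λg and λ·conj(f)·g − f·conj(g) are constant. -/

import Mathlib

noncomputable section

open MeasureTheory Complex ComplexConjugate InnerProductSpace ContinuousLinearMap

namespace GSIO

instance : Fact (0 < 2 * Real.pi) := ⟨by positivity⟩

/-- The circle, modeled as `ℝ / 2πℤ`. -/
abbrev Circ : Type := AddCircle (2 * Real.pi)

/-- Normalized Haar (arc-length) measure on the circle. -/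
abbrev μC : Measure Circ := AddCircle.haarAddCircle

/-- `L²` of the circle. -/
abbrev L2 : Type := Lp ℂ 2 μC

/-- `L^∞` of the circle. -/
abbrev Linf : Type := Lp ℂ ⊤ μC

/-- The Hardy space `H²`: those `L²` functions whose negative Fourier coefficients vanish. -/
def Hardy : Submodule ℂ L2 where
  carrier := {f : L2 | ∀ n : ℤ, n < 0 → fourierCoeff (f : Circ → ℂ) n = 0}
  zero_mem' := by
    intro n hn
    rw [← fourierBasis_repr]
    simp
  add_mem' := by
    intro a b ha hb n hn
    have ha' := ha n hn
    have hb' := hb n hn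
    rw [← fourierBasis_repr] at ha' hb' ⊢
    rw [map_add, lp.coeFn_add, Pi.add_apply, ha', hb', add_zero]
  smul_mem' := by
    intro c a ha n hn
    have ha' := ha n hn
    rw [← fourierBasis_repr] at ha' ⊢
    rw [_root_.map_smul, lp.coeFn_smul, Pi.smul_apply, ha', smul_zero]

theorem isClosed_Hardy : IsClosed (Hardy : Set L2) := by
  have h : (Hardy : Set L2) =
      ⋂ n : {m : ℤ // m < 0}, (fun f : L2 =>
        (innerSL ℂ (fourierBasis (T := 2 * Real.pi) n.1)) f) ⁻¹' {0} := by
    ext f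
    simp only [Set.mem_iInter, Set.mem_preimage, Set.mem_singleton_iff, SetLike.mem_coe]
    constructor
    · intro hf n
      have h1 := hf n.1 n.2
      rw [← fourierBasis_repr, fourierBasis.repr_apply_apply] at h1
      simpa using h1
    · intro hf n hn
      have h1 := hf ⟨n, hn⟩
      rw [← fourierBasis_repr, fourierBasis.repr_apply_apply]
      simpa using h1
  rw [h]
  exact isClosed_iInter fun n =>
    isClosed_singleton.preimage (innerSL ℂ _).continuous

instance : CompleteSpace Hardy := isClosed_Hardy.completeSpace_coe

/-- The Riesz projection `P₊`, i.e. the orthogonal projection of `L²` onto `H²`. -/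
def Pp : L2 →L[ℂ] L2 := Hardy.subtypeL.comp (Hardy.orthogonalProjectionOnto)

/-- `P₋ = I − P₊`. -/
def Pm : L2 →L[ℂ] L2 := ContinuousLinearMap.id ℂ L2 - Pp

/-- The pointwise product of an `L^∞` function with an `L²` function, as an `L²` function. -/
def mulFun (φ : Linf) (x : L2) : L2 :=
  ((Lp.memLp x).smul (p := ⊤) (r := 2) (Lp.memLp φ)).toLp ((φ : Circ → ℂ) • (x : Circ → ℂ))

theorem mulFun_add (φ : Linf) (x y : L2) : mulFun φ (x + y) = mulFun φ x + mulFun φ y := by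
  rw [mulFun, mulFun, mulFun, ← MemLp.toLp_add]
  apply MemLp.toLp_congr
  filter_upwards [Lp.coeFn_add x y] with t ht
  have ht' : ((x + y : L2) : Circ → ℂ) t = (x : Circ → ℂ) t + (y : Circ → ℂ) t := by
    simpa using ht
  simp only [Pi.mul_apply, Pi.smul_apply, Pi.add_apply, smul_eq_mul, ht']
  ring

theorem mulFun_smul (c : ℂ) (φ : Linf) (x : L2) : mulFun φ (c • x) = c • mulFun φ x := by
  rw [mulFun, mulFun, ← MemLp.toLp_const_smul]
  apply MemLp.toLp_congr
  filter_upwards [Lp.coeFn_smul c x] with t ht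
  have ht' : ((c • x : L2) : Circ → ℂ) t = c * (x : Circ → ℂ) t := by
    simpa using ht
  simp only [Pi.mul_apply, Pi.smul_apply, smul_eq_mul, ht']
  ring

theorem norm_mulFun_le (φ : Linf) (x : L2) : ‖mulFun φ x‖ ≤ ‖φ‖ * ‖x‖ := by
  rw [mulFun, Lp.norm_toLp]
  have h := eLpNorm_smul_le_eLpNorm_top_mul_eLpNorm (μ := μC) 2
    (Lp.aestronglyMeasurable x) (φ : Circ → ℂ)
  refine le_trans (ENNReal.toReal_mono ?_ h) ?_
  · exact ENNReal.mul_ne_top (Lp.eLpNorm_ne_top φ) (Lp.eLpNorm_ne_top x)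
  · rw [ENNReal.toReal_mul, Lp.norm_def, Lp.norm_def]

/-- The multiplication operator `M_φ` on `L²`, for `φ ∈ L^∞`. -/
def mul (φ : Linf) : L2 →L[ℂ] L2 :=
  LinearMap.mkContinuous
    { toFun := mulFun φ
      map_add' := mulFun_add φ
      map_smul' := fun c x => mulFun_smul c φ x }
    ‖φ‖ (fun x => norm_mulFun_le φ x)

/-- Pointwise product in `L^∞`. -/
def mulInf (φ ψ : Linf) : Linf :=
  ((Lp.memLp ψ).smul (p := ⊤) (r := ⊤) (Lp.memLp φ)).toLp ((φ : Circ → ℂ) • (ψ : Circ → ℂ))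

/-- Complex conjugation on `L^∞`. -/
def conjInf (φ : Linf) : Linf :=
  (show MemLp (fun t => star ((φ : Circ → ℂ) t)) ⊤ μC from
    ⟨continuous_star.comp_aestronglyMeasurable (Lp.aestronglyMeasurable φ), by
      rw [eLpNorm_congr_norm_ae (g := (φ : Circ → ℂ))
        (Filter.Eventually.of_forall fun t => norm_star _)]
      exact Lp.eLpNorm_lt_top φ⟩).toLp _

/-- Complex conjugation on `L²`. -/
def conjL2 (x : L2) : L2 :=
  (show MemLp (fun t => star ((x : Circ → ℂ) t)) 2 μC from
    ⟨continuous_star.comp_aestronglyMeasurable (Lp.aestronglyMeasurable x), by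
      rw [eLpNorm_congr_norm_ae (g := (x : Circ → ℂ))
        (Filter.Eventually.of_forall fun t => norm_star _)]
      exact Lp.eLpNorm_lt_top x⟩).toLp _

/-- The inclusion `L^∞ ⊆ L²` (the measure is finite). -/
def toL2 (φ : Linf) : L2 := ((Lp.memLp φ).mono_exponent le_top).toLp φ

/-- The constant function `c` as an element of `L^∞`. -/
def constInf (c : ℂ) : Linf := (memLp_const c).toLp (fun _ => c)

/-- An `L^∞` function is constant (a.e.). -/
def IsConst (φ : Linf) : Prop := ∃ c : ℂ, φ = constInf c

/-- `φ ∈ H^∞ = L^∞ ∩ H²`: the negative Fourier coefficients of `φ` vanish. -/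
def MemHinf (φ : Linf) : Prop := ∀ n : ℤ, n < 0 → fourierCoeff (φ : Circ → ℂ) n = 0

/-- The coordinate function `z` as an element of `L^∞`. -/
def zInf : Linf := fourierLp (T := 2 * Real.pi) ⊤ 1

/-- The function `z̄` as an element of `L^∞`. -/
def zbarInf : Linf := fourierLp (T := 2 * Real.pi) ⊤ (-1)

/-- The antiunitary operator `V : h ↦ z̄ ⬝ conj h` on `L²`. -/
def Vmap (x : L2) : L2 := mul zbarInf (conjL2 x)

/-- `φ₋ = P₋ φ` for `φ ∈ L^∞`, viewed inside `L²`. -/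
def mI (φ : Linf) : L2 := Pm (toL2 φ)

/-- The rank-one operator `p ⊗ q : x ↦ ⟪x, q⟫ · p` (the inner product being conjugate-linear
in `q`). -/
def rankOne {E : Type*} [NormedAddCommGroup E] [InnerProductSpace ℂ E] (p q : E) : E →L[ℂ] E :=
  (innerSL ℂ q).smulRight p

/-- The Hilbert space direct sum `L² ⊕ L²`. -/
abbrev L2sq : Type := WithLp 2 (L2 × L2)

/-- A pair of `L²` functions, viewed as a vector in `L² ⊕ L²`. -/
def pair (x y : L2) : L2sq := (WithLp.equiv 2 (L2 × L2)).symm (x, y)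

/-- Notation for the pointwise product in `L^∞`. -/
scoped infixl:70 " ⊙ " => GSIO.mulInf

/-- The Toeplitz operator `T_φ = P₊ M_φ P₊` (viewed as acting on the corner `H²` of `L²`). -/
def Toeplitz (φ : Linf) : L2 →L[ℂ] L2 := Pp ∘L mul φ ∘L Pp

/-- The Hankel operator `H_φ = P₋ M_φ P₊ : H² → (H²)^⊥` (as a corner operator on `L²`). -/
def Hankel (φ : Linf) : L2 →L[ℂ] L2 := Pm ∘L mul φ ∘L Pp

/-- The dual Toeplitz operator `T̃_φ = P₋ M_φ P₋` on `(H²)^⊥` (as a corner operator on `L²`). -/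
def dualToeplitz (φ : Linf) : L2 →L[ℂ] L2 := Pm ∘L mul φ ∘L Pm

/-- The generalized Cauchy singular integral operator with symbol `[[f, u], [g, v]]`:
`R x = P₊ f P₊ x + P₋ g P₊ x + P₊ u P₋ x + P₋ v P₋ x`. -/
def Rop (f u g v : Linf) : L2 →L[ℂ] L2 :=
  Pp ∘L mul f ∘L Pp + Pm ∘L mul g ∘L Pp + Pp ∘L mul u ∘L Pm + Pm ∘L mul v ∘L Pm

/-- The singular integral operator `S_{f,g} = M_f P₊ + M_g P₋` on `L²`. -/
def Sop (f g : Linf) : L2 →L[ℂ] L2 := mul f ∘L Pp + mul g ∘L Pm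



/-- Negation `t ↦ -t` preserves the Haar measure of the circle. -/
theorem mp_neg : MeasurePreserving (fun t : Circ => -t) μC μC :=
  Measure.measurePreserving_neg μC

/-- Composition with `t ↦ -t` on `L²`. -/
def reflL2 : L2 →L[ℂ] L2 :=
  (Lp.compMeasurePreservingₗᵢ ℂ (fun t : Circ => -t) mp_neg).toContinuousLinearMap

/-- Composition with `t ↦ -t` on `L^∞`: for `φ ∈ L^∞`, `φ̃(z) = φ(z̄)`. -/
def reflInf (φ : Linf) : Linf := Lp.compMeasurePreserving (fun t : Circ => -t) mp_neg φ

/-- `φ* (z) = conj (φ(z̄))`. -/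
def starInf (φ : Linf) : Linf := conjInf (reflInf φ)

/-- The flip operator `J : (Jh)(z) = z̄ · h(z̄)` on `L²`. -/
def Jop : L2 →L[ℂ] L2 := mul zbarInf ∘L reflL2

/-- The Hankel operator `𝕳_φ = P₊ M_φ J` on `H²` (as a corner operator on `L²`). -/
def HankelPlus (φ : Linf) : L2 →L[ℂ] L2 := Pp ∘L mul φ ∘L Jop ∘L Pp

/-- The adjoint `H*_φ` of the Hankel operator `H_φ`. -/
def HankelAdj (φ : Linf) : L2 →L[ℂ] L2 := ContinuousLinearMap.adjoint (Hankel φ)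

/-- `θ ∈ L^∞` is an inner function: `θ ∈ H^∞` and `|θ| = 1` a.e. -/
def IsInner (θ : Linf) : Prop := MemHinf θ ∧ ∀ᵐ t ∂μC, ‖(θ : Circ → ℂ) t‖ = 1

/-- The orthogonal projection of `L²` onto `K_θ^⊥ = θH² ⊕ z̄·conj(H²)`, namely
`P₋ + M_θ P₊ M_{conj θ}`. -/
def Qproj (θ : Linf) : L2 →L[ℂ] L2 := Pm + mul θ ∘L Pp ∘L mul (conjInf θ)


/-! ### Infrastructure -/


section Infra

local notation "⟪" x ", " y "⟫" => @inner ℂ _ _ x y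

/-- Fourier basis vectors of `L²`. -/
def bE (k : ℤ) : L2 := fourierBasis (T := 2 * Real.pi) k

/-- Fourier coefficients of an `L²` function. -/
def co (x : L2) (k : ℤ) : ℂ := fourierCoeff (x : Circ → ℂ) k

/-- Fourier coefficients of an `L^∞` function. -/
def cf (φ : Linf) (k : ℤ) : ℂ := fourierCoeff (φ : Circ → ℂ) k

lemma fourierCoeff_congr_ae {u v : Circ → ℂ} (h : u =ᵐ[μC] v) (n : ℤ) :
    fourierCoeff u n = fourierCoeff v n := by
  unfold fourierCoeff
  refine integral_congr_ae ?_
  filter_upwards [h] with t ht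
  rw [ht]

lemma co_eq_inner (x : L2) (k : ℤ) : co x k = ⟪bE k, x⟫ := by
  rw [co, ← fourierBasis_repr, fourierBasis.repr_apply_apply, bE]

lemma inner_eq_tsum (x y : L2) : ⟪x, y⟫ = ∑' k : ℤ, conj (co x k) * co y k := by
  rw [← (fourierBasis (T := 2 * Real.pi)).tsum_inner_mul_inner x y]
  congr 1; ext k
  rw [co_eq_inner, co_eq_inner, ← inner_conj_symm (𝕜 := ℂ) x, bE]

lemma summable_co (x y : L2) : Summable fun k : ℤ => conj (co x k) * co y k := by
  have h := (fourierBasis (T := 2 * Real.pi)).summable_inner_mul_inner x y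
  refine h.congr fun k => ?_
  rw [co_eq_inner, co_eq_inner, ← inner_conj_symm (𝕜 := ℂ) x, bE]

lemma coeFn_mul (φ : Linf) (x : L2) :
    (mul φ x : Circ → ℂ) =ᵐ[μC] fun t => (φ : Circ → ℂ) t * (x : Circ → ℂ) t := by
  have := MemLp.coeFn_toLp ((Lp.memLp x).smul (p := ⊤) (r := 2) (Lp.memLp φ))
  filter_upwards [this] with t ht
  exact ht

lemma coeFn_conjInf (φ : Linf) :
    (conjInf φ : Circ → ℂ) =ᵐ[μC] fun t => conj ((φ : Circ → ℂ) t) := by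
  exact MemLp.coeFn_toLp _

lemma coeFn_constInf (c : ℂ) : (constInf c : Circ → ℂ) =ᵐ[μC] fun _ => c :=
  MemLp.coeFn_toLp _

lemma coeFn_mulInf (φ ψ : Linf) :
    (φ ⊙ ψ : Circ → ℂ) =ᵐ[μC] fun t => (φ : Circ → ℂ) t * (ψ : Circ → ℂ) t := by
  have := MemLp.coeFn_toLp ((Lp.memLp ψ).smul (p := ⊤) (r := ⊤) (Lp.memLp φ))
  filter_upwards [this] with t ht
  exact ht

lemma coeFn_toL2 (φ : Linf) : (toL2 φ : Circ → ℂ) =ᵐ[μC] (φ : Circ → ℂ) :=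
  MemLp.coeFn_toLp _

lemma coeFn_bE (k : ℤ) : (bE k : Circ → ℂ) =ᵐ[μC] fun t => fourier k t := by
  have : bE k = fourierLp (T := 2 * Real.pi) 2 k := by
    rw [bE, ← coe_fourierBasis]
  rw [this]
  exact coeFn_fourierLp 2 k

end Infra

section Infra2

local notation "⟪" x ", " y "⟫" => @inner ℂ _ _ x y

lemma inner_L2 (x y : L2) :
    ⟪x, y⟫ = ∫ t, conj ((x : Circ → ℂ) t) * (y : Circ → ℂ) t ∂μC := by
  rw [MeasureTheory.L2.inner_def]
  refine integral_congr_ae ?_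
  filter_upwards with t
  simp [RCLike.inner_apply, mul_comm]

lemma inner_mul_left (φ : Linf) (u x : L2) :
    ⟪u, mul φ x⟫ = ⟪mul (conjInf φ) u, x⟫ := by
  rw [inner_L2, inner_L2]
  refine integral_congr_ae ?_
  filter_upwards [coeFn_mul φ x, coeFn_mul (conjInf φ) u, coeFn_conjInf φ] with t h1 h2 h3
  rw [h1, h2, h3]
  simp only [map_mul, RingHom.coe_comp]
  ring_nf
  simp [Complex.conj_conj]
  ring

lemma co_mul (φ : Linf) (x : L2) (k : ℤ) :
    co (mul φ x) k = ⟪mul (conjInf φ) (bE k), x⟫ := by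
  rw [co_eq_inner, inner_mul_left]

lemma co_bE (α k : ℤ) : co (bE α) k = if k = α then 1 else 0 := by
  rw [co, ← fourierBasis_repr, bE, (fourierBasis (T := 2 * Real.pi)).repr_self]
  rw [lp.single_apply]
  simp [eq_comm, Pi.single_apply]

lemma co_mul_bE (φ : Linf) (α k : ℤ) : co (mul φ (bE α)) k = cf φ (k - α) := by
  rw [co, cf]
  rw [fourierCoeff_congr_ae (coeFn_mul φ (bE α)) k]
  unfold fourierCoeff
  refine integral_congr_ae ?_
  filter_upwards [coeFn_bE α] with t ht
  rw [ht]
  simp only [smul_eq_mul]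
  rw [show -(k - α) = -k + α by ring, fourier_add]
  ring

lemma co_toL2 (φ : Linf) (k : ℤ) : co (toL2 φ) k = cf φ k := by
  rw [co, cf, fourierCoeff_congr_ae (coeFn_toL2 φ) k]

lemma conjInf_conjInf (φ : Linf) : conjInf (conjInf φ) = φ := by
  apply Lp.ext
  filter_upwards [coeFn_conjInf (conjInf φ), coeFn_conjInf φ] with t h1 h2
  rw [h1, h2]
  simp

lemma mul_mul (φ ψ : Linf) (x : L2) : mul φ (mul ψ x) = mul ψ (mul φ x) := by
  apply Lp.ext
  filter_upwards [coeFn_mul ψ x, coeFn_mul φ x, coeFn_mul φ (mul ψ x),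
    coeFn_mul ψ (mul φ x)] with t h1 h2 h3 h4
  rw [h3, h4, h1, h2]; ring

lemma mul_zInf_bE (k : ℤ) : mul zInf (bE k) = bE (k + 1) := by
  apply Lp.ext
  filter_upwards [coeFn_mul zInf (bE k), coeFn_bE k, coeFn_bE (k+1),
    coeFn_fourierLp (T := 2 * Real.pi) ⊤ 1] with t h1 h2 h3 h4
  rw [h1, h3, h2]
  simp only [zInf] at *
  rw [h4, show k + 1 = 1 + k by ring, fourier_add]

lemma mul_zbarInf_bE (k : ℤ) : mul zbarInf (bE k) = bE (k - 1) := by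
  apply Lp.ext
  filter_upwards [coeFn_mul zbarInf (bE k), coeFn_bE k, coeFn_bE (k-1),
    coeFn_fourierLp (T := 2 * Real.pi) ⊤ (-1)] with t h1 h2 h3 h4
  rw [h1, h3, h2]
  simp only [zbarInf] at *
  rw [h4, show k - 1 = -1 + k by ring, fourier_add]

lemma conjInf_zbarInf : conjInf zbarInf = zInf := by
  apply Lp.ext
  filter_upwards [coeFn_conjInf zbarInf, coeFn_fourierLp (T := 2 * Real.pi) ⊤ (-1),
    coeFn_fourierLp (T := 2 * Real.pi) ⊤ 1] with t h1 h2 h3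
  simp only [zInf, zbarInf] at *
  rw [h1, h3, h2]
  rw [fourier_neg, Complex.conj_conj]

lemma conjInf_zInf : conjInf zInf = zbarInf := by
  rw [← conjInf_zbarInf, conjInf_conjInf]

end Infra2

section Infra3

local notation "⟪" x ", " y "⟫" => @inner ℂ _ _ x y

lemma mem_Hardy_iff (x : L2) : x ∈ Hardy ↔ ∀ k : ℤ, k < 0 → co x k = 0 := Iff.rfl

/-- The "antianalytic" subspace: all nonnegative coefficients vanish. -/
def Anti (x : L2) : Prop := ∀ k : ℤ, 0 ≤ k → co x k = 0

lemma co_def (x : L2) (k : ℤ) : co x k = fourierCoeff (x : Circ → ℂ) k := rfl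

lemma bE_mem_Hardy {k : ℤ} (hk : 0 ≤ k) : bE k ∈ Hardy := by
  intro j hj
  rw [← co_def, co_bE]
  simp [show j ≠ k by omega]

lemma bE_anti {k : ℤ} (hk : k < 0) : Anti (bE k) := by
  intro j hj
  rw [co_bE]
  simp [show j ≠ k by omega]

lemma inner_eq_zero_of_anti {u x : L2} (hu : u ∈ Hardy) (hx : Anti x) : ⟪u, x⟫ = 0 := by
  rw [inner_eq_tsum]
  have : ∀ k : ℤ, conj (co u k) * co x k = 0 := by
    intro k
    rcases lt_or_ge k 0 with h | h
    · rw [co_def, hu k h]; simp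
    · rw [hx k h]; simp
  simp only [this]
  exact tsum_zero

lemma Pp_of_mem {x : L2} (hx : x ∈ Hardy) : Pp x = x := by
  have : (Hardy.orthogonalProjectionOnto x : L2) = x := by
    rw [← Submodule.starProjection_apply, Submodule.starProjection_eq_self_iff]
    exact hx
  simpa [Pp] using this

lemma Pp_of_anti {x : L2} (hx : Anti x) : Pp x = 0 := by
  have hmem : x ∈ Hardyᗮ := by
    rw [Submodule.mem_orthogonal]
    intro u hu
    exact inner_eq_zero_of_anti hu hx
  have : Hardy.orthogonalProjectionOnto x = 0 :=
    Submodule.orthogonalProjectionOnto_apply_of_mem_orthogonal hmem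
  simp [Pp, this]

lemma Pm_of_mem {x : L2} (hx : x ∈ Hardy) : Pm x = 0 := by
  simp [Pm, Pp_of_mem hx]

lemma Pm_of_anti {x : L2} (hx : Anti x) : Pm x = x := by
  simp [Pm, Pp_of_anti hx]

lemma Sop_of_mem (f g : Linf) {x : L2} (hx : x ∈ Hardy) : Sop f g x = mul f x := by
  simp [Sop, Pp_of_mem hx, Pm_of_mem hx]

lemma Sop_of_anti (f g : Linf) {x : L2} (hx : Anti x) : Sop f g x = mul g x := by
  simp [Sop, Pp_of_anti hx, Pm_of_anti hx]

lemma Sop_bE_nonneg (f g : Linf) {k : ℤ} (hk : 0 ≤ k) : Sop f g (bE k) = mul f (bE k) :=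
  Sop_of_mem f g (bE_mem_Hardy hk)

lemma Sop_bE_neg (f g : Linf) {k : ℤ} (hk : k < 0) : Sop f g (bE k) = mul g (bE k) :=
  Sop_of_anti f g (bE_anti hk)

lemma co_adjoint (f g : Linf) (x : L2) (k : ℤ) :
    co (ContinuousLinearMap.adjoint (Sop f g) x) k = ⟪Sop f g (bE k), x⟫ := by
  rw [co_eq_inner, ContinuousLinearMap.adjoint_inner_right]

lemma normal_inner_eq {f g : Linf}
    (hN : Sop f g ∘L ContinuousLinearMap.adjoint (Sop f g) =
      ContinuousLinearMap.adjoint (Sop f g) ∘L Sop f g) (x y : L2) :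
    ⟪ContinuousLinearMap.adjoint (Sop f g) x, ContinuousLinearMap.adjoint (Sop f g) y⟫
      = ⟪Sop f g x, Sop f g y⟫ := by
  have h := congrArg (fun T : L2 →L[ℂ] L2 => ⟪T x, y⟫) hN
  simp only [ContinuousLinearMap.comp_apply] at h
  rw [ContinuousLinearMap.adjoint_inner_left] at h
  rw [← h]
  exact ContinuousLinearMap.adjoint_inner_right _ _ _

end Infra3

section Infra4

local notation "⟪" x ", " y "⟫" => @inner ℂ _ _ x y

lemma co_add (x y : L2) (k : ℤ) : co (x + y) k = co x k + co y k := by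
  simp only [co_eq_inner, inner_add_right]

lemma co_smul (c : ℂ) (x : L2) (k : ℤ) : co (c • x) k = c * co x k := by
  simp only [co_eq_inner, inner_smul_right]

lemma Anti_add {x y : L2} (hx : Anti x) (hy : Anti y) : Anti (x + y) := by
  intro k hk; rw [co_add, hx k hk, hy k hk, add_zero]

lemma Anti_smul (c : ℂ) {x : L2} (hx : Anti x) : Anti (c • x) := by
  intro k hk; rw [co_smul, hx k hk, mul_zero]

lemma tsum_shift_up (t : ℤ → ℂ) :
    (∑' k : ℤ, if 0 ≤ k then t (k + 1) else 0) = ∑' k : ℤ, if 1 ≤ k then t k else 0 := by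
  have := (Equiv.addRight (1 : ℤ)).tsum_eq (f := fun k : ℤ => if 1 ≤ k then t k else 0)
  rw [← this]
  refine tsum_congr fun k => ?_
  simp only [Equiv.coe_addRight]
  congr 1
  · simp only [eq_iff_iff]; omega

lemma tsum_shift_down (t : ℤ → ℂ) :
    (∑' k : ℤ, if k ≤ -1 then t (k - 1) else 0) = ∑' k : ℤ, if k ≤ -2 then t k else 0 := by
  have := (Equiv.subRight (1 : ℤ)).tsum_eq (f := fun k : ℤ => if k ≤ -2 then t k else 0)
  rw [← this]
  refine tsum_congr fun k => ?_
  simp only [Equiv.subRight_apply]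
  congr 1
  · simp only [eq_iff_iff]; omega

lemma tsum_telescope_up (t : ℤ → ℂ) (hs : Summable fun k : ℤ => if 0 ≤ k then t k else 0) :
    (∑' k : ℤ, if 0 ≤ k then t k else 0) = t 0 + ∑' k : ℤ, if 1 ≤ k then t k else 0 := by
  have hpt : ∀ k : ℤ, (if 1 ≤ k then t k else 0)
      = (if 0 ≤ k then t k else 0) - (if k = 0 then t 0 else 0) := by
    intro k
    rcases lt_trichotomy k 0 with h | h | h
    · simp [show ¬(1:ℤ) ≤ k by omega, show ¬(0:ℤ) ≤ k by omega, show k ≠ 0 by omega]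
    · simp [h]
    · simp [show (1:ℤ) ≤ k by omega, show (0:ℤ) ≤ k by omega, show k ≠ 0 by omega]
  have hs2 : Summable fun k : ℤ => if k = 0 then t 0 else 0 := by
    apply summable_of_ne_finset_zero (s := {0})
    intro k hk
    simp at hk
    simp [hk]
  calc (∑' k : ℤ, if 0 ≤ k then t k else 0)
      = ∑' k : ℤ, ((if 0 ≤ k then t k else 0) - (if k = 0 then t 0 else 0))
        + ∑' k : ℤ, (if k = 0 then t 0 else 0) := by
        rw [← Summable.tsum_add (hs.sub hs2) hs2]
        refine tsum_congr fun k => ?_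
        ring
    _ = t 0 + ∑' k : ℤ, (if 1 ≤ k then t k else 0) := by
        rw [tsum_ite_eq (0 : ℤ) (fun _ => t 0)]
        rw [add_comm]
        congr 1
        exact (tsum_congr fun k => (hpt k).symm)

lemma tsum_telescope_down (t : ℤ → ℂ) (hs : Summable fun k : ℤ => if k ≤ -1 then t k else 0) :
    (∑' k : ℤ, if k ≤ -1 then t k else 0) = t (-1) + ∑' k : ℤ, if k ≤ -2 then t k else 0 := by
  have hpt : ∀ k : ℤ, (if k ≤ -2 then t k else 0)
      = (if k ≤ -1 then t k else 0) - (if k = -1 then t (-1) else 0) := by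
    intro k
    rcases lt_trichotomy k (-1) with h | h | h
    · simp [show k ≤ -2 by omega, show k ≤ -1 by omega, show k ≠ -1 by omega]
    · simp [h]
    · simp [show ¬k ≤ -2 by omega, show ¬k ≤ -1 by omega, show k ≠ -1 by omega]
  have hs2 : Summable fun k : ℤ => if k = -1 then t (-1) else 0 := by
    apply summable_of_ne_finset_zero (s := {-1})
    intro k hk
    simp at hk
    simp [hk]
  calc (∑' k : ℤ, if k ≤ -1 then t k else 0)
      = ∑' k : ℤ, ((if k ≤ -1 then t k else 0) - (if k = -1 then t (-1) else 0))
        + ∑' k : ℤ, (if k = -1 then t (-1) else 0) := by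
        rw [← Summable.tsum_add (hs.sub hs2) hs2]
        refine tsum_congr fun k => ?_
        ring
    _ = t (-1) + ∑' k : ℤ, (if k ≤ -2 then t k else 0) := by
        rw [tsum_ite_eq (-1 : ℤ) (fun _ => t (-1))]
        rw [add_comm]
        congr 1
        exact (tsum_congr fun k => (hpt k).symm)

/-- If two (a priori conjugate-linear-in-nothing) inner functionals have equal modulus on a
subspace-like set, they are unimodular multiples of each other there. -/
lemma modulus_functional (Q : L2 → Prop) (hadd : ∀ x y, Q x → Q y → Q (x + y))
    (hsmul : ∀ (c : ℂ) x, Q x → Q (c • x)) {u v : L2}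
    (h : ∀ x, Q x → conj ⟪u, x⟫ * ⟪u, x⟫ = conj ⟪v, x⟫ * ⟪v, x⟫) :
    ∃ lam : ℂ, ‖lam‖ = 1 ∧ ∀ x, Q x → ⟪u, x⟫ = conj lam * ⟪v, x⟫ := by
  by_cases hz : ∀ x, Q x → ⟪v, x⟫ = 0
  · refine ⟨1, by simp, fun x hx => ?_⟩
    have h0 := h x hx
    rw [hz x hx] at h0
    simp only [map_zero, mul_zero, zero_mul] at h0
    rcases mul_eq_zero.mp h0 with h1 | h1
    · rw [hz x hx]
      simpa using congrArg (starRingEnd ℂ) h1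
    · rw [h1, hz x hx]; simp
  · push_neg at hz
    obtain ⟨x₀, hx₀Q, hx₀⟩ := hz
    obtain ⟨y₀, hy₀Q, hvy₀⟩ : ∃ y₀ : L2, Q y₀ ∧ ⟪v, y₀⟫ = 1 :=
      ⟨(⟪v, x₀⟫)⁻¹ • x₀, hsmul _ _ hx₀Q, by rw [inner_smul_right]; field_simp⟩
    have h0 : conj ⟪u, y₀⟫ * ⟪u, y₀⟫ = 1 := by
      have := h y₀ hy₀Q
      rw [hvy₀, map_one, mul_one] at this
      exact this
    have hnorm : ‖(⟪u, y₀⟫ : ℂ)‖ = 1 := by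
      have h4 : ((Complex.normSq ⟪u, y₀⟫ : ℂ)) = 1 := by
        rw [← Complex.mul_conj]
        linear_combination h0
      have h5 : Complex.normSq ⟪u, y₀⟫ = 1 := by exact_mod_cast h4
      have h6 : ‖⟪u, y₀⟫‖ ^ 2 = 1 := by rw [Complex.sq_norm]; exact h5
      have h7 : ‖⟪u, y₀⟫‖ = 1 := by
        nlinarith [norm_nonneg (⟪u, y₀⟫ : ℂ)]
      exact h7
    refine ⟨conj ⟪u, y₀⟫, by rw [RCLike.norm_conj]; exact hnorm, fun x hx => ?_⟩
    have h3 : conj ⟪u, x⟫ * ⟪u, x⟫ = conj ⟪v, x⟫ * ⟪v, x⟫ := h x hx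
    have h1 : conj (⟪u, y₀⟫ + ⟪u, x⟫) * (⟪u, y₀⟫ + ⟪u, x⟫)
        = conj (1 + ⟪v, x⟫) * (1 + ⟪v, x⟫) := by
      have := h (y₀ + x) (hadd _ _ hy₀Q hx)
      rw [inner_add_right, inner_add_right, hvy₀] at this
      exact this
    have h2 : conj (⟪u, y₀⟫ + Complex.I * ⟪u, x⟫) * (⟪u, y₀⟫ + Complex.I * ⟪u, x⟫)
        = conj (1 + Complex.I * ⟪v, x⟫) * (1 + Complex.I * ⟪v, x⟫) := by
      have := h (y₀ + Complex.I • x) (hadd _ _ hy₀Q (hsmul _ _ hx))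
      rw [inner_add_right, inner_smul_right, inner_add_right, inner_smul_right, hvy₀] at this
      exact this
    have goal : ⟪u, x⟫ = ⟪u, y₀⟫ * ⟪v, x⟫ := by
      simp only [map_add, map_mul, map_one, Complex.conj_I] at h1 h2
      have E1 : conj ⟪u, y₀⟫ * ⟪u, x⟫ + conj ⟪u, x⟫ * ⟪u, y₀⟫ = ⟪v, x⟫ + conj ⟪v, x⟫ := by
        linear_combination h1 - h0 - h3
      have E2 : conj ⟪u, y₀⟫ * ⟪u, x⟫ - conj ⟪u, x⟫ * ⟪u, y₀⟫ = ⟪v, x⟫ - conj ⟪v, x⟫ := by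
        linear_combination (-Complex.I) * h2 + Complex.I * h0 + (-(Complex.I^3)) * h3
          + (conj ⟪u, y₀⟫ * ⟪u, x⟫ - conj ⟪u, x⟫ * ⟪u, y₀⟫ - ⟪v, x⟫ + conj ⟪v, x⟫) * Complex.I_sq
      linear_combination (⟪u, y₀⟫/2) * E1 + (⟪u, y₀⟫/2) * E2 - ⟪u, x⟫ * h0
    rw [goal, Complex.conj_conj]

end Infra4

section Infra5

local notation "⟪" x ", " y "⟫" => @inner ℂ _ _ x y

variable {f g : Linf}

lemma inner_mul_conj_self (φ : Linf) (x : L2) :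
    ⟪mul φ x, mul φ x⟫ = ⟪mul (conjInf φ) x, mul (conjInf φ) x⟫ := by
  rw [inner_L2, inner_L2]
  refine integral_congr_ae ?_
  filter_upwards [coeFn_mul φ x, coeFn_mul (conjInf φ) x, coeFn_conjInf φ] with t h1 h2 h3
  rw [h1, h2, h3]
  simp only [map_mul]
  ring_nf
  simp [Complex.conj_conj]
  ring

lemma co_A (f g : Linf) (x : L2) (k : ℤ) :
    co (ContinuousLinearMap.adjoint (Sop f g) x) k
      = if 0 ≤ k then ⟪mul f (bE k), x⟫ else ⟪mul g (bE k), x⟫ := by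
  rw [co_adjoint]
  split_ifs with h
  · rw [Sop_bE_nonneg f g h]
  · rw [Sop_bE_neg f g (by omega)]

lemma co_mul_conj (φ : Linf) (x : L2) (k : ℤ) :
    co (mul (conjInf φ) x) k = ⟪mul φ (bE k), x⟫ := by
  rw [co_mul, conjInf_conjInf]

lemma inner_shift_zbar (φ : Linf) (k : ℤ) (x : L2) :
    ⟪mul φ (bE k), mul zbarInf x⟫ = ⟪mul φ (bE (k + 1)), x⟫ := by
  rw [inner_mul_left zbarInf, conjInf_zbarInf, mul_mul, mul_zInf_bE]

lemma inner_shift_z (φ : Linf) (k : ℤ) (x : L2) :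
    ⟪mul φ (bE k), mul zInf x⟫ = ⟪mul φ (bE (k - 1)), x⟫ := by
  rw [inner_mul_left zInf, conjInf_zInf, mul_mul, mul_zbarInf_bE]

lemma Anti_mul_zbar {x : L2} (hx : Anti x) : Anti (mul zbarInf x) := by
  intro k hk
  rw [co_mul, conjInf_zbarInf, mul_zInf_bE, ← co_eq_inner]
  exact hx _ (by omega)

lemma Hardy_mul_z {x : L2} (hx : x ∈ Hardy) : mul zInf x ∈ Hardy := by
  intro k hk
  rw [← co_def, co_mul, conjInf_zInf, mul_zbarInf_bE, ← co_eq_inner]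
  exact hx _ (by omega)

lemma split_anti
    (hN : Sop f g ∘L ContinuousLinearMap.adjoint (Sop f g) =
      ContinuousLinearMap.adjoint (Sop f g) ∘L Sop f g) {x : L2} (hx : Anti x) :
    Summable (fun k : ℤ => if 0 ≤ k then
        conj ⟪mul f (bE k), x⟫ * ⟪mul f (bE k), x⟫
          - conj ⟪mul g (bE k), x⟫ * ⟪mul g (bE k), x⟫ else 0)
    ∧ (∑' k : ℤ, if 0 ≤ k then
        conj ⟪mul f (bE k), x⟫ * ⟪mul f (bE k), x⟫
          - conj ⟪mul g (bE k), x⟫ * ⟪mul g (bE k), x⟫ else 0) = 0 := by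
  set A := ContinuousLinearMap.adjoint (Sop f g) x with hA
  set G := mul (conjInf g) x with hG
  have hpt : ∀ k : ℤ, conj (co A k) * co A k - conj (co G k) * co G k
      = (if 0 ≤ k then
        conj ⟪mul f (bE k), x⟫ * ⟪mul f (bE k), x⟫
          - conj ⟪mul g (bE k), x⟫ * ⟪mul g (bE k), x⟫ else 0) := by
    intro k
    rw [hA, hG, co_A, co_mul_conj]
    split_ifs with h
    · rfl
    · ring
  have hsum : Summable (fun k : ℤ => conj (co A k) * co A k - conj (co G k) * co G k) :=
    (summable_co A A).sub (summable_co G G)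
  have htsum : (∑' k : ℤ, (conj (co A k) * co A k - conj (co G k) * co G k)) = 0 := by
    rw [Summable.tsum_sub (summable_co A A) (summable_co G G)]
    rw [← inner_eq_tsum, ← inner_eq_tsum]
    rw [hA, hG, normal_inner_eq hN x x, Sop_of_anti f g hx, ← inner_mul_conj_self]
    simp
  constructor
  · exact hsum.congr hpt
  · have hcongr := tsum_congr (L := SummationFilter.unconditional ℤ) hpt
    rw [← hcongr]
    exact htsum

lemma split_mem
    (hN : Sop f g ∘L ContinuousLinearMap.adjoint (Sop f g) =
      ContinuousLinearMap.adjoint (Sop f g) ∘L Sop f g) {x : L2} (hx : x ∈ Hardy) :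
    Summable (fun k : ℤ => if k ≤ -1 then
        conj ⟪mul g (bE k), x⟫ * ⟪mul g (bE k), x⟫
          - conj ⟪mul f (bE k), x⟫ * ⟪mul f (bE k), x⟫ else 0)
    ∧ (∑' k : ℤ, if k ≤ -1 then
        conj ⟪mul g (bE k), x⟫ * ⟪mul g (bE k), x⟫
          - conj ⟪mul f (bE k), x⟫ * ⟪mul f (bE k), x⟫ else 0) = 0 := by
  set A := ContinuousLinearMap.adjoint (Sop f g) x with hA
  set F := mul (conjInf f) x with hF
  have hpt : ∀ k : ℤ, conj (co A k) * co A k - conj (co F k) * co F k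
      = (if k ≤ -1 then
        conj ⟪mul g (bE k), x⟫ * ⟪mul g (bE k), x⟫
          - conj ⟪mul f (bE k), x⟫ * ⟪mul f (bE k), x⟫ else 0) := by
    intro k
    rw [hA, hF, co_A, co_mul_conj]
    rcases le_or_gt 0 k with h | h
    · rw [if_pos h, if_neg (by omega)]; ring
    · rw [if_neg (by omega), if_pos (by omega)]
  have hsum : Summable (fun k : ℤ => conj (co A k) * co A k - conj (co F k) * co F k) :=
    (summable_co A A).sub (summable_co F F)
  have htsum : (∑' k : ℤ, (conj (co A k) * co A k - conj (co F k) * co F k)) = 0 := by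
    rw [Summable.tsum_sub (summable_co A A) (summable_co F F)]
    rw [← inner_eq_tsum, ← inner_eq_tsum]
    rw [hA, hF, normal_inner_eq hN x x, Sop_of_mem f g hx, ← inner_mul_conj_self]
    simp
  constructor
  · exact hsum.congr hpt
  · have hcongr := tsum_congr (L := SummationFilter.unconditional ℤ) hpt
    rw [← hcongr]
    exact htsum

lemma key_anti
    (hN : Sop f g ∘L ContinuousLinearMap.adjoint (Sop f g) =
      ContinuousLinearMap.adjoint (Sop f g) ∘L Sop f g) {x : L2} (hx : Anti x) :
    conj ⟪mul f (bE 0), x⟫ * ⟪mul f (bE 0), x⟫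
      = conj ⟪mul g (bE 0), x⟫ * ⟪mul g (bE 0), x⟫ := by
  set t : ℤ → ℂ := fun k => conj ⟪mul f (bE k), x⟫ * ⟪mul f (bE k), x⟫
          - conj ⟪mul g (bE k), x⟫ * ⟪mul g (bE k), x⟫ with ht
  obtain ⟨hs1, he1⟩ := split_anti hN hx
  obtain ⟨_, he2⟩ := split_anti hN (Anti_mul_zbar hx)
  have he2' : (∑' k : ℤ, if 0 ≤ k then t (k + 1) else 0) = 0 := by
    refine Eq.trans (tsum_congr fun k => ?_) he2
    rcases le_or_gt 0 k with h | h
    · rw [if_pos h, if_pos h]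
      simp only [ht, inner_shift_zbar]
    · rw [if_neg (by omega), if_neg (by omega)]
  have htel := tsum_telescope_up t hs1
  rw [he1, ← tsum_shift_up t, he2', add_zero] at htel
  have h0 : t 0 = 0 := htel.symm
  rw [ht] at h0
  exact sub_eq_zero.mp h0

end Infra5

section Infra6

local notation "⟪" x ", " y "⟫" => @inner ℂ _ _ x y

variable {f g : Linf}

lemma key_mem
    (hN : Sop f g ∘L ContinuousLinearMap.adjoint (Sop f g) =
      ContinuousLinearMap.adjoint (Sop f g) ∘L Sop f g) {x : L2} (hx : x ∈ Hardy) :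
    conj ⟪mul g (bE (-1)), x⟫ * ⟪mul g (bE (-1)), x⟫
      = conj ⟪mul f (bE (-1)), x⟫ * ⟪mul f (bE (-1)), x⟫ := by
  set t : ℤ → ℂ := fun k => conj ⟪mul g (bE k), x⟫ * ⟪mul g (bE k), x⟫
          - conj ⟪mul f (bE k), x⟫ * ⟪mul f (bE k), x⟫ with ht
  obtain ⟨hs1, he1⟩ := split_mem hN hx
  obtain ⟨_, he2⟩ := split_mem hN (Hardy_mul_z hx)
  have he2' : (∑' k : ℤ, if k ≤ -1 then t (k - 1) else 0) = 0 := by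
    refine Eq.trans (tsum_congr fun k => ?_) he2
    rcases le_or_gt k (-1) with h | h
    · rw [if_pos h, if_pos h]
      simp only [ht, inner_shift_z]
    · rw [if_neg (by omega), if_neg (by omega)]
  have htel := tsum_telescope_down t hs1
  rw [he1, ← tsum_shift_down t, he2', add_zero] at htel
  have h0 : t (-1) = 0 := htel.symm
  rw [ht] at h0
  exact sub_eq_zero.mp h0

lemma inner_bE_right (u : L2) (n : ℤ) : ⟪u, bE n⟫ = conj (co u n) := by
  rw [co_eq_inner, inner_conj_symm]

lemma R1 (hN : Sop f g ∘L ContinuousLinearMap.adjoint (Sop f g) =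
      ContinuousLinearMap.adjoint (Sop f g) ∘L Sop f g) :
    ∃ lam : ℂ, ‖lam‖ = 1 ∧ ∀ n : ℤ, n < 0 → cf f n = lam * cf g n := by
  obtain ⟨lam, hl, hrel⟩ := modulus_functional Anti (fun x y hx hy => Anti_add hx hy)
    (fun c x hx => Anti_smul c hx) (u := mul f (bE 0)) (v := mul g (bE 0))
    (fun x hx => key_anti hN hx)
  refine ⟨lam, hl, fun n hn => ?_⟩
  have h := hrel (bE n) (bE_anti hn)
  rw [inner_bE_right, inner_bE_right, co_mul_bE, co_mul_bE, sub_zero, ← map_mul] at h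
  have := congrArg (starRingEnd ℂ) h
  simpa using this

lemma R2 (hN : Sop f g ∘L ContinuousLinearMap.adjoint (Sop f g) =
      ContinuousLinearMap.adjoint (Sop f g) ∘L Sop f g) :
    ∃ mu : ℂ, ‖mu‖ = 1 ∧ ∀ n : ℤ, 0 < n → cf f n = mu * cf g n := by
  obtain ⟨mu, hl, hrel⟩ := modulus_functional (· ∈ Hardy) (fun x y hx hy => Hardy.add_mem hx hy)
    (fun c x hx => Hardy.smul_mem c hx) (u := mul f (bE (-1))) (v := mul g (bE (-1)))
    (fun x hx => (key_mem hN hx).symm)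
  refine ⟨mu, hl, fun n hn => ?_⟩
  have h := hrel (bE (n - 1)) (bE_mem_Hardy (by omega))
  rw [inner_bE_right, inner_bE_right, co_mul_bE, co_mul_bE, ← map_mul] at h
  have h2 := congrArg (starRingEnd ℂ) h
  simp only [Complex.conj_conj] at h2
  have e : n - 1 - (-1) = n := by ring
  rw [e] at h2
  exact h2

end Infra6

section Infra7

local notation "⟪" x ", " y "⟫" => @inner ℂ _ _ x y

variable {f g : Linf}

/-- Summand for `⟪S* e_α, S* e_β⟫`. -/
def usum (f g : Linf) (α β : ℤ) (k : ℤ) : ℂ :=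
  if 0 ≤ k then cf f (α - k) * conj (cf f (β - k)) else cf g (α - k) * conj (cf g (β - k))

/-- Summand for `⟪S e_α, S e_β⟫`. -/
def vsum (f g : Linf) (α β : ℤ) (k : ℤ) : ℂ :=
  conj (cf (if 0 ≤ α then f else g) (k - α)) * cf (if 0 ≤ β then f else g) (k - β)

lemma Sop_bE (f g : Linf) (α : ℤ) :
    Sop f g (bE α) = mul (if 0 ≤ α then f else g) (bE α) := by
  split_ifs with h
  · exact Sop_bE_nonneg f g h
  · exact Sop_bE_neg f g (by omega)

lemma inner_SS (α β : ℤ) :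
    ⟪Sop f g (bE α), Sop f g (bE β)⟫ = ∑' k : ℤ, vsum f g α β k := by
  rw [Sop_bE, Sop_bE, inner_eq_tsum]
  exact tsum_congr fun k => by rw [vsum, co_mul_bE, co_mul_bE]

lemma summable_vsum (f g : Linf) (α β : ℤ) : Summable (vsum f g α β) := by
  refine (summable_co (mul (if 0 ≤ α then f else g) (bE α))
    (mul (if 0 ≤ β then f else g) (bE β))).congr fun k => ?_
  rw [vsum, co_mul_bE, co_mul_bE]

lemma co_A_bE (f g : Linf) (α k : ℤ) :
    co (ContinuousLinearMap.adjoint (Sop f g) (bE α)) k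
      = if 0 ≤ k then conj (cf f (α - k)) else conj (cf g (α - k)) := by
  rw [co_A]
  split_ifs with h
  · rw [inner_bE_right, co_mul_bE]
  · rw [inner_bE_right, co_mul_bE]

lemma inner_AA (α β : ℤ) :
    ⟪ContinuousLinearMap.adjoint (Sop f g) (bE α),
      ContinuousLinearMap.adjoint (Sop f g) (bE β)⟫ = ∑' k : ℤ, usum f g α β k := by
  rw [inner_eq_tsum]
  refine tsum_congr fun k => ?_
  rw [co_A_bE, co_A_bE, usum]
  split_ifs with h
  · rw [Complex.conj_conj]
  · rw [Complex.conj_conj]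

lemma summable_usum (f g : Linf) (α β : ℤ) : Summable (usum f g α β) := by
  refine (summable_co (ContinuousLinearMap.adjoint (Sop f g) (bE α))
    (ContinuousLinearMap.adjoint (Sop f g) (bE β))).congr fun k => ?_
  rw [co_A_bE, co_A_bE, usum]
  split_ifs with h
  · rw [Complex.conj_conj]
  · rw [Complex.conj_conj]

lemma co_sub (x y : L2) (k : ℤ) : co (x - y) k = co x k - co y k := by
  simp only [co_eq_inner, inner_sub_right]

lemma co_ext {x y : L2} (h : ∀ k : ℤ, co x k = co y k) : x = y := by
  have hz : ∀ k : ℤ, co (x - y) k = 0 := fun k => by rw [co_sub, h k, sub_self]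
  have : ⟪x - y, x - y⟫ = 0 := by
    rw [inner_eq_tsum]
    have : ∀ k : ℤ, conj (co (x - y) k) * co (x - y) k = 0 := fun k => by
      rw [hz k]; simp
    simp only [this]
    exact tsum_zero
  have := inner_self_eq_zero.mp this
  exact sub_eq_zero.mp this

lemma op_ext {T₁ T₂ : L2 →L[ℂ] L2} (h : ∀ α : ℤ, T₁ (bE α) = T₂ (bE α)) : T₁ = T₂ := by
  have hd : Dense ((Submodule.span ℂ (Set.range (fourierBasis (T := 2 * Real.pi)))
      : Submodule ℂ L2) : Set L2) := by
    have h1 := (fourierBasis (T := 2 * Real.pi)).dense_span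
    have h2 : ((Submodule.span ℂ (Set.range (fourierBasis (T := 2 * Real.pi)))
        : Submodule ℂ L2).topologicalClosure : Set L2) = (⊤ : Submodule ℂ L2) := by
      rw [h1]
    rw [Dense]
    intro x
    have : x ∈ ((⊤ : Submodule ℂ L2) : Set L2) := trivial
    rw [← h2] at this
    exact this
  have heq : Set.EqOn T₁ T₂ ((Submodule.span ℂ (Set.range (fourierBasis (T := 2 * Real.pi)))
      : Submodule ℂ L2) : Set L2) := by
    intro x hx
    induction hx using Submodule.span_induction with
    | mem x hx => obtain ⟨α, rfl⟩ := hx; exact h α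
    | zero => simp
    | add a b _ _ ha hb => simp [map_add, ha, hb]
    | smul c a _ ha => simp only [ContinuousLinearMap.map_smul, ha]
  apply ContinuousLinearMap.ext
  intro x
  have := Continuous.ext_on hd T₁.continuous T₂.continuous heq
  exact congrFun this x

lemma normal_iff_entries (f g : Linf) :
    (Sop f g ∘L ContinuousLinearMap.adjoint (Sop f g) =
      ContinuousLinearMap.adjoint (Sop f g) ∘L Sop f g)
    ↔ ∀ α β : ℤ, (∑' k : ℤ, usum f g α β k) = ∑' k : ℤ, vsum f g α β k := by
  constructor
  · intro hN α β
    rw [← inner_AA, ← inner_SS, normal_inner_eq hN]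
  · intro hE
    apply op_ext
    intro α
    apply co_ext
    intro k
    rw [co_eq_inner, co_eq_inner]
    simp only [ContinuousLinearMap.comp_apply]
    calc ⟪bE k, Sop f g (ContinuousLinearMap.adjoint (Sop f g) (bE α))⟫
        = ⟪ContinuousLinearMap.adjoint (Sop f g) (bE k),
            ContinuousLinearMap.adjoint (Sop f g) (bE α)⟫ := by
          rw [ContinuousLinearMap.adjoint_inner_left]
      _ = ∑' j : ℤ, usum f g k α j := inner_AA k α
      _ = ∑' j : ℤ, vsum f g k α j := hE k α
      _ = ⟪Sop f g (bE k), Sop f g (bE α)⟫ := (inner_SS k α).symm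
      _ = ⟪bE k, ContinuousLinearMap.adjoint (Sop f g) (Sop f g (bE α))⟫ := by
          rw [ContinuousLinearMap.adjoint_inner_right]

end Infra7

section Infra8

local notation "⟪" x ", " y "⟫" => @inner ℂ _ _ x y

variable {f g : Linf}

lemma R3 (hN : Sop f g ∘L ContinuousLinearMap.adjoint (Sop f g) =
      ContinuousLinearMap.adjoint (Sop f g) ∘L Sop f g) {n m : ℤ} (hn : n < 0) (hm : 0 < m) :
    cf f n * conj (cf f m) = cf g n * conj (cf g m) := by
  have hE := (normal_iff_entries f g).mp hN
  have h1 := hE n m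
  have h2 := hE (n - 1) (m - 1)
  have h2u : (∑' k : ℤ, usum f g (n-1) (m-1) (k - 1)) = ∑' k : ℤ, usum f g (n-1) (m-1) k :=
    (Equiv.subRight (1 : ℤ)).tsum_eq (usum f g (n-1) (m-1))
  have h2v : (∑' k : ℤ, vsum f g (n-1) (m-1) (k - 1)) = ∑' k : ℤ, vsum f g (n-1) (m-1) k :=
    (Equiv.subRight (1 : ℤ)).tsum_eq (vsum f g (n-1) (m-1))
  set Δ : ℂ := cf f n * conj (cf f m) - cf g n * conj (cf g m) with hΔ
  have hu : ∀ k : ℤ, usum f g n m k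
      = usum f g (n-1) (m-1) (k - 1) + (if k = 0 then Δ else 0) := by
    intro k
    unfold usum
    rcases lt_trichotomy k 0 with h | h | h
    · rw [if_neg (by omega), if_neg (by omega), if_neg (by omega)]
      have e1 : n - 1 - (k - 1) = n - k := by ring
      have e2 : m - 1 - (k - 1) = m - k := by ring
      rw [e1, e2, add_zero]
    · subst h
      rw [if_pos le_rfl, if_neg (by omega), if_pos rfl]
      have e1 : n - 1 - (0 - 1 : ℤ) = n := by ring
      have e2 : m - 1 - (0 - 1 : ℤ) = m := by ring
      rw [e1, e2, hΔ]
      have e3 : n - (0:ℤ) = n := by ring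
      have e4 : m - (0:ℤ) = m := by ring
      rw [e3, e4]
      ring
    · rw [if_pos (by omega), if_pos (by omega), if_neg (by omega)]
      have e1 : n - 1 - (k - 1) = n - k := by ring
      have e2 : m - 1 - (k - 1) = m - k := by ring
      rw [e1, e2, add_zero]
  have hv : ∀ k : ℤ, vsum f g n m k = vsum f g (n-1) (m-1) (k - 1) := by
    intro k
    unfold vsum
    rw [if_neg (show ¬(0:ℤ) ≤ n by omega), if_pos (show (0:ℤ) ≤ m by omega),
      if_neg (show ¬(0:ℤ) ≤ n - 1 by omega), if_pos (show (0:ℤ) ≤ m - 1 by omega)]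
    have e1 : k - 1 - (n - 1) = k - n := by ring
    have e2 : k - 1 - (m - 1) = k - m := by ring
    rw [e1, e2]
  have hsum2 : Summable (fun k : ℤ => usum f g (n-1) (m-1) (k - 1)) := by
    have h := ((Equiv.subRight (1 : ℤ)).summable_iff
      (f := usum f g (n-1) (m-1))).mpr (summable_usum f g (n-1) (m-1))
    exact h
  have hdelta : Summable (fun k : ℤ => if k = 0 then Δ else 0) := by
    apply summable_of_ne_finset_zero (s := {0})
    intro k hk
    simp at hk
    simp [hk]
  have hbig : (∑' k : ℤ, usum f g n m k)
      = (∑' k : ℤ, usum f g (n-1) (m-1) (k - 1)) + Δ := by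
    calc (∑' k : ℤ, usum f g n m k)
        = ∑' k : ℤ, (usum f g (n-1) (m-1) (k - 1) + (if k = 0 then Δ else 0)) :=
          tsum_congr hu
      _ = (∑' k : ℤ, usum f g (n-1) (m-1) (k - 1)) + ∑' k : ℤ, (if k = 0 then Δ else 0) :=
          Summable.tsum_add hsum2 hdelta
      _ = (∑' k : ℤ, usum f g (n-1) (m-1) (k - 1)) + Δ := by rw [tsum_ite_eq (0 : ℤ) (fun _ => Δ)]
  have hchain : (∑' k : ℤ, usum f g n m k) = ∑' k : ℤ, usum f g (n-1) (m-1) (k - 1) := by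
    rw [h1, h2u]
    calc (∑' k : ℤ, vsum f g n m k)
        = ∑' k : ℤ, vsum f g (n-1) (m-1) (k - 1) := tsum_congr hv
      _ = ∑' k : ℤ, vsum f g (n-1) (m-1) k := h2v
      _ = ∑' k : ℤ, usum f g (n-1) (m-1) k := h2.symm
  have : Δ = 0 := by
    have := hbig.symm.trans hchain
    linear_combination this
  exact sub_eq_zero.mp this

end Infra8

section Infra9

local notation "⟪" x ", " y "⟫" => @inner ℂ _ _ x y

lemma toL2_sub (φ ψ : Linf) : toL2 (φ - ψ) = toL2 φ - toL2 ψ := by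
  apply Lp.ext
  filter_upwards [coeFn_toL2 (φ - ψ), coeFn_toL2 φ, coeFn_toL2 ψ, Lp.coeFn_sub φ ψ,
    Lp.coeFn_sub (toL2 φ) (toL2 ψ)] with t h1 h2 h3 h4 h5
  rw [h1, h5, Pi.sub_apply, h4, Pi.sub_apply, h2, h3]

lemma toL2_smul (c : ℂ) (φ : Linf) : toL2 (c • φ) = c • toL2 φ := by
  apply Lp.ext
  filter_upwards [coeFn_toL2 (c • φ), coeFn_toL2 φ, Lp.coeFn_smul c φ,
    Lp.coeFn_smul c (toL2 φ)] with t h1 h2 h3 h4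
  rw [h1, h4, Pi.smul_apply, h3, Pi.smul_apply, h2]

lemma cf_sub (φ ψ : Linf) (k : ℤ) : cf (φ - ψ) k = cf φ k - cf ψ k := by
  rw [← co_toL2, ← co_toL2, ← co_toL2, toL2_sub, co_sub]

lemma cf_smul (c : ℂ) (φ : Linf) (k : ℤ) : cf (c • φ) k = c * cf φ k := by
  rw [← co_toL2, ← co_toL2, toL2_smul, co_smul]

lemma toL2_constInf (c : ℂ) : toL2 (constInf c) = c • bE 0 := by
  apply Lp.ext
  filter_upwards [coeFn_toL2 (constInf c), coeFn_constInf c, Lp.coeFn_smul c (bE 0),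
    coeFn_bE 0] with t h1 h2 h3 h4
  rw [h1, h2, h3, Pi.smul_apply, h4]
  simp [fourier_zero]

lemma cf_constInf (c : ℂ) (k : ℤ) : cf (constInf c) k = if k = 0 then c else 0 := by
  rw [← co_toL2, toL2_constInf, co_smul, co_bE]
  split_ifs <;> simp

lemma isConst_iff (φ : Linf) : IsConst φ ↔ ∀ k : ℤ, k ≠ 0 → cf φ k = 0 := by
  constructor
  · rintro ⟨c, rfl⟩ k hk
    rw [cf_constInf, if_neg hk]
  · intro h
    refine ⟨cf φ 0, ?_⟩
    have h2 : toL2 φ = toL2 (constInf (cf φ 0)) := by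
      apply co_ext
      intro k
      rw [co_toL2, co_toL2, cf_constInf]
      rcases eq_or_ne k 0 with hk | hk
      · subst hk; simp
      · rw [if_neg hk, h k hk]
    have hae : (toL2 φ : Circ → ℂ) =ᵐ[μC] (toL2 (constInf (cf φ 0)) : Circ → ℂ) := by
      rw [h2]
    apply Lp.ext
    filter_upwards [hae, coeFn_toL2 φ, coeFn_toL2 (constInf (cf φ 0))] with t h1 h3 h4
    rw [← h3, h1, h4]

lemma cf_conjInf (φ : Linf) (k : ℤ) : cf (conjInf φ) k = conj (cf φ (-k)) := by
  rw [cf, cf, fourierCoeff_congr_ae (coeFn_conjInf φ)]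
  unfold fourierCoeff
  rw [← integral_conj]
  refine integral_congr_ae ?_
  filter_upwards with t
  simp only [smul_eq_mul, map_mul]
  rw [← fourier_neg, neg_neg]

lemma toL2_mulInf (φ ψ : Linf) : toL2 (φ ⊙ ψ) = mul φ (toL2 ψ) := by
  apply Lp.ext
  filter_upwards [coeFn_toL2 (φ ⊙ ψ), coeFn_mulInf φ ψ, coeFn_mul φ (toL2 ψ),
    coeFn_toL2 ψ] with t h1 h2 h3 h4
  rw [h1, h2, h3, h4]

lemma cf_mulInf (φ ψ : Linf) (k : ℤ) :
    cf (φ ⊙ ψ) k = ∑' j : ℤ, cf φ (k - j) * cf ψ j := by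
  rw [← co_toL2, toL2_mulInf, co_mul, inner_eq_tsum]
  refine tsum_congr fun j => ?_
  rw [co_mul_bE, cf_conjInf, co_toL2, Complex.conj_conj]
  have e : -(j - k) = k - j := by ring
  rw [e]

lemma summable_cf_mulInf (φ ψ : Linf) (k : ℤ) :
    Summable (fun j : ℤ => cf φ (k - j) * cf ψ j) := by
  refine (summable_co (mul (conjInf φ) (bE k)) (toL2 ψ)).congr fun j => ?_
  rw [co_mul_bE, cf_conjInf, co_toL2, Complex.conj_conj]
  have e : -(j - k) = k - j := by ring
  rw [e]

end Infra9

section Infra10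

local notation "⟪" x ", " y "⟫" => @inner ℂ _ _ x y

variable {f g : Linf} {lam c : ℂ}

/-- The autocorrelation sums of the symbol `g`. -/
def Sg (g : Linf) (s : ℤ) : ℂ := ∑' j : ℤ, cf g (s + j) * conj (cf g j)

lemma summable_Sg (g : Linf) (s : ℤ) : Summable fun j : ℤ => cf g (s + j) * conj (cf g j) := by
  refine (summable_co (toL2 g) (mul g (bE (-s)))).congr fun j => ?_
  rw [co_toL2, co_mul_bE]
  have e : j - -s = s + j := by ring
  rw [e]
  ring

lemma reindex_RX1 (g : Linf) (k : ℤ) :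
    (∑' j : ℤ, conj (cf g (j - k)) * cf g j) = Sg g k := by
  rw [Sg, ← (Equiv.subRight (k : ℤ)).tsum_eq (fun i => cf g (k + i) * conj (cf g i))]
  refine tsum_congr fun j => ?_
  simp only [Equiv.subRight_apply]
  have e : k + (j - k) = j := by ring
  rw [e]
  ring

lemma reindex_RX2 (g : Linf) (k : ℤ) :
    (∑' j : ℤ, cf g (k - j) * conj (cf g (-j))) = Sg g k := by
  rw [Sg, ← (Equiv.neg ℤ).tsum_eq (fun i => cf g (k + i) * conj (cf g i))]
  refine tsum_congr fun j => ?_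
  simp only [Equiv.neg_apply]
  have e : k + -j = k - j := by ring
  rw [e]

lemma reindex_RbS (g : Linf) (α β : ℤ) :
    (∑' k : ℤ, cf g (α - k) * conj (cf g (β - k))) = Sg g (α - β) := by
  rw [Sg, ← (Equiv.subLeft (β : ℤ)).tsum_eq (fun i => cf g (α - β + i) * conj (cf g i))]
  refine tsum_congr fun k => ?_
  simp only [Equiv.subLeft_apply]
  have e : α - β + (β - k) = α - k := by ring
  rw [e]

lemma reindex_RX3 (g : Linf) (α β : ℤ) :
    (∑' k : ℤ, conj (cf g (k - α)) * cf g (k - β)) = Sg g (α - β) := by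
  rw [← reindex_RX1 g (α - β),
    ← (Equiv.subRight (β : ℤ)).tsum_eq (fun j => conj (cf g (j - (α - β))) * cf g j)]
  refine tsum_congr fun k => ?_
  simp only [Equiv.subRight_apply]
  have e1 : k - β - (α - β) = k - α := by ring
  rw [e1]

lemma summable_RX1 (g : Linf) (k : ℤ) :
    Summable fun j : ℤ => conj (cf g (j - k)) * cf g j := by
  refine (summable_co (mul g (bE k)) (toL2 g)).congr fun j => ?_
  rw [co_toL2, co_mul_bE]

lemma summable_RX2 (g : Linf) (k : ℤ) :
    Summable fun j : ℤ => cf g (k - j) * conj (cf g (-j)) := by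
  refine (summable_cf_mulInf g (conjInf g) k).congr fun j => ?_
  rw [cf_conjInf]

lemma summable_RbS (g : Linf) (α β : ℤ) :
    Summable fun k : ℤ => cf g (α - k) * conj (cf g (β - k)) := by
  refine (summable_usum g g α β).congr fun k => ?_
  rw [usum, ite_self]

lemma summable_RX3 (g : Linf) (α β : ℤ) :
    Summable fun k : ℤ => conj (cf g (k - α)) * cf g (k - β) := by
  refine (summable_co (mul g (bE α)) (mul g (bE β))).congr fun k => ?_
  rw [co_mul_bE, co_mul_bE]

lemma summable_single (k₀ : ℤ) (x : ℂ) : Summable fun k : ℤ => if k = k₀ then x else 0 := by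
  apply summable_of_ne_finset_zero (s := {k₀})
  intro k hk
  simp at hk
  simp [hk]

/-- The key identity: the Fourier coefficients of `λ conj(f) g − f conj(g)` in terms of the
autocorrelation of `g`, when `f = λ g + c`. -/
lemma KeyId (hlam : conj lam * lam = 1)
    (hrel : ∀ k : ℤ, cf f k = lam * cf g k + (if k = 0 then c else 0)) (k : ℤ) :
    cf (lam • (conjInf f ⊙ g) - f ⊙ conjInf g) k
      = (1 - lam) * Sg g k + lam * conj c * cf g k - c * conj (cf g (-k)) := by
  rw [cf_sub, cf_smul]
  have T1 : cf (conjInf f ⊙ g) k = conj lam * Sg g k + conj c * cf g k := by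
    rw [cf_mulInf]
    have hpt : ∀ j : ℤ, cf (conjInf f) (k - j) * cf g j
        = conj lam * (conj (cf g (j - k)) * cf g j) + (if j = k then conj c * cf g k else 0) := by
      intro j
      rw [cf_conjInf]
      have e : -(k - j) = j - k := by ring
      rw [e, hrel (j - k)]
      rcases eq_or_ne j k with hj | hj
      · subst hj
        rw [if_pos rfl, if_pos (by ring)]
        simp only [map_add, map_mul]
        ring
      · rw [if_neg hj, if_neg (by omega)]
        simp only [map_add, map_mul, map_zero, add_zero]
        ring
    calc (∑' j : ℤ, cf (conjInf f) (k - j) * cf g j)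
        = ∑' j : ℤ, (conj lam * (conj (cf g (j - k)) * cf g j)
            + (if j = k then conj c * cf g k else 0)) := tsum_congr hpt
      _ = (∑' j : ℤ, conj lam * (conj (cf g (j - k)) * cf g j))
            + ∑' j : ℤ, (if j = k then conj c * cf g k else 0) :=
          Summable.tsum_add ((summable_RX1 g k).mul_left _) (summable_single k _)
      _ = conj lam * Sg g k + conj c * cf g k := by
          rw [tsum_ite_eq k (fun _ => conj c * cf g k), tsum_mul_left, reindex_RX1]
  have T2 : cf (f ⊙ conjInf g) k = lam * Sg g k + c * conj (cf g (-k)) := by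
    rw [cf_mulInf]
    have hpt : ∀ j : ℤ, cf f (k - j) * cf (conjInf g) j
        = lam * (cf g (k - j) * conj (cf g (-j)))
            + (if j = k then c * conj (cf g (-k)) else 0) := by
      intro j
      rw [cf_conjInf, hrel (k - j)]
      rcases eq_or_ne j k with hj | hj
      · subst hj
        rw [if_pos rfl, if_pos (by ring)]
        ring
      · rw [if_neg hj, if_neg (by omega), add_zero]
        ring
    calc (∑' j : ℤ, cf f (k - j) * cf (conjInf g) j)
        = ∑' j : ℤ, (lam * (cf g (k - j) * conj (cf g (-j)))
            + (if j = k then c * conj (cf g (-k)) else 0)) := tsum_congr hpt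
      _ = (∑' j : ℤ, lam * (cf g (k - j) * conj (cf g (-j))))
            + ∑' j : ℤ, (if j = k then c * conj (cf g (-k)) else 0) :=
          Summable.tsum_add ((summable_RX2 g k).mul_left _) (summable_single k _)
      _ = lam * Sg g k + c * conj (cf g (-k)) := by
          rw [tsum_ite_eq k (fun _ => c * conj (cf g (-k))), tsum_mul_left, reindex_RX2]
  rw [T1, T2]
  linear_combination (Sg g k) * hlam

end Infra10

section Infra11

local notation "⟪" x ", " y "⟫" => @inner ℂ _ _ x y

variable {f g : Linf} {lam c : ℂ}

lemma B2block (hlam : conj lam * lam = 1)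
    (hrel : ∀ k : ℤ, cf f k = lam * cf g k + (if k = 0 then c else 0))
    {α β : ℤ} (hα : α < 0) (hβ : β < 0) :
    (∑' k : ℤ, usum f g α β k) = ∑' k : ℤ, vsum f g α β k := by
  have hu : ∀ k : ℤ, usum f g α β k = cf g (α - k) * conj (cf g (β - k)) := by
    intro k
    unfold usum
    split_ifs with h
    · rw [hrel (α - k), hrel (β - k), if_neg (by omega : ¬(α - k = 0)),
        if_neg (by omega : ¬(β - k = 0)), add_zero, add_zero]
      simp only [map_mul]
      linear_combination (cf g (α - k) * conj (cf g (β - k))) * hlam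
    · rfl
  have hv : ∀ k : ℤ, vsum f g α β k = conj (cf g (k - α)) * cf g (k - β) := by
    intro k
    unfold vsum
    rw [if_neg (by omega : ¬(0:ℤ) ≤ α), if_neg (by omega : ¬(0:ℤ) ≤ β)]
  calc (∑' k : ℤ, usum f g α β k)
      = ∑' k : ℤ, cf g (α - k) * conj (cf g (β - k)) := tsum_congr hu
    _ = Sg g (α - β) := reindex_RbS g α β
    _ = ∑' k : ℤ, conj (cf g (k - α)) * cf g (k - β) := (reindex_RX3 g α β).symm
    _ = ∑' k : ℤ, vsum f g α β k := (tsum_congr hv).symm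

lemma B3block (hlam : conj lam * lam = 1)
    (hrel : ∀ k : ℤ, cf f k = lam * cf g k + (if k = 0 then c else 0))
    {α β : ℤ} (hα : α < 0) (hβ : 0 ≤ β) :
    (∑' k : ℤ, usum f g α β k) - (∑' k : ℤ, vsum f g α β k)
      = cf (lam • (conjInf f ⊙ g) - f ⊙ conjInf g) (α - β) := by
  have hu : ∀ k : ℤ, usum f g α β k
      = cf g (α - k) * conj (cf g (β - k))
        + (if k = β then lam * conj c * cf g (α - β) else 0) := by
    intro k
    rcases le_or_gt 0 k with h | h
    · rcases eq_or_ne k β with hk | hk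
      · subst hk
        unfold usum
        rw [if_pos h, if_pos rfl]
        rw [hrel (α - k), hrel (k - k), if_neg (by omega : ¬(α - k = 0)),
          if_pos (by omega : k - k = 0), add_zero]
        simp only [map_add, map_mul, map_zero, add_zero, eq_self_iff_true, if_true]
        linear_combination (cf g (α - k) * conj (cf g (k - k))) * hlam
      · unfold usum
        rw [if_pos h, if_neg hk]
        rw [hrel (α - k), hrel (β - k), if_neg (by omega : ¬(α - k = 0)),
          if_neg (by omega : ¬(β - k = 0)), add_zero, add_zero, add_zero]
        simp only [map_mul]
        linear_combination (cf g (α - k) * conj (cf g (β - k))) * hlam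
    · unfold usum
      rw [if_neg (by omega : ¬(0:ℤ) ≤ k), if_neg (by omega : ¬(k = β)), add_zero]
  have hv : ∀ k : ℤ, vsum f g α β k
      = lam * (conj (cf g (k - α)) * cf g (k - β))
        + (if k = β then c * conj (cf g (β - α)) else 0) := by
    intro k
    unfold vsum
    rw [if_neg (by omega : ¬(0:ℤ) ≤ α), if_pos hβ]
    rcases eq_or_ne k β with hk | hk
    · subst hk
      rw [hrel (k - k), if_pos (by omega : k - k = 0), if_pos rfl]
      ring
    · rw [hrel (k - β), if_neg (by omega : ¬(k - β = 0)), if_neg hk, add_zero, add_zero]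
      ring
  have hU : (∑' k : ℤ, usum f g α β k) = Sg g (α - β) + lam * conj c * cf g (α - β) := by
    calc (∑' k : ℤ, usum f g α β k)
        = ∑' k : ℤ, (cf g (α - k) * conj (cf g (β - k))
            + (if k = β then lam * conj c * cf g (α - β) else 0)) := tsum_congr hu
      _ = (∑' k : ℤ, cf g (α - k) * conj (cf g (β - k)))
            + ∑' k : ℤ, (if k = β then lam * conj c * cf g (α - β) else 0) :=
          Summable.tsum_add (summable_RbS g α β) (summable_single β _)
      _ = Sg g (α - β) + lam * conj c * cf g (α - β) := by
          rw [reindex_RbS, tsum_ite_eq]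
  have hV : (∑' k : ℤ, vsum f g α β k)
      = lam * Sg g (α - β) + c * conj (cf g (β - α)) := by
    calc (∑' k : ℤ, vsum f g α β k)
        = ∑' k : ℤ, (lam * (conj (cf g (k - α)) * cf g (k - β))
            + (if k = β then c * conj (cf g (β - α)) else 0)) := tsum_congr hv
      _ = (∑' k : ℤ, lam * (conj (cf g (k - α)) * cf g (k - β)))
            + ∑' k : ℤ, (if k = β then c * conj (cf g (β - α)) else 0) :=
          Summable.tsum_add ((summable_RX3 g α β).mul_left lam) (summable_single β _)
      _ = lam * Sg g (α - β) + c * conj (cf g (β - α)) := by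
          rw [tsum_mul_left, reindex_RX3, tsum_ite_eq]
  rw [hU, hV, KeyId hlam hrel (α - β)]
  have e : -(α - β) = β - α := by ring
  rw [e]
  ring

lemma B4block (hlam : conj lam * lam = 1)
    (hrel : ∀ k : ℤ, cf f k = lam * cf g k + (if k = 0 then c else 0))
    {α β : ℤ} (hα : 0 ≤ α) (hβ : β < 0) :
    (∑' k : ℤ, usum f g α β k) - (∑' k : ℤ, vsum f g α β k)
      = -(conj lam) * cf (lam • (conjInf f ⊙ g) - f ⊙ conjInf g) (α - β) := by
  have hu : ∀ k : ℤ, usum f g α β k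
      = cf g (α - k) * conj (cf g (β - k))
        + (if k = α then conj lam * c * conj (cf g (β - α)) else 0) := by
    intro k
    rcases le_or_gt 0 k with h | h
    · rcases eq_or_ne k α with hk | hk
      · subst hk
        unfold usum
        rw [if_pos h, if_pos rfl]
        rw [hrel (k - k), hrel (β - k), if_pos (by omega : k - k = 0),
          if_neg (by omega : ¬(β - k = 0)), add_zero]
        simp only [map_add, map_mul, map_zero, add_zero, eq_self_iff_true, if_true]
        linear_combination (cf g (k - k) * conj (cf g (β - k))) * hlam
      · unfold usum
        rw [if_pos h, if_neg hk]
        rw [hrel (α - k), hrel (β - k), if_neg (by omega : ¬(α - k = 0)),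
          if_neg (by omega : ¬(β - k = 0)), add_zero, add_zero, add_zero]
        simp only [map_mul]
        linear_combination (cf g (α - k) * conj (cf g (β - k))) * hlam
    · unfold usum
      rw [if_neg (by omega : ¬(0:ℤ) ≤ k), if_neg (by omega : ¬(k = α)), add_zero]
  have hv : ∀ k : ℤ, vsum f g α β k
      = conj lam * (conj (cf g (k - α)) * cf g (k - β))
        + (if k = α then conj c * cf g (α - β) else 0) := by
    intro k
    unfold vsum
    rw [if_pos hα, if_neg (by omega : ¬(0:ℤ) ≤ β)]
    rcases eq_or_ne k α with hk | hk
    · subst hk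
      rw [hrel (k - k), if_pos (by omega : k - k = 0), if_pos rfl]
      simp only [map_add, map_mul, map_zero, add_zero, eq_self_iff_true, if_true]
      ring
    · rw [hrel (k - α), if_neg (by omega : ¬(k - α = 0)), if_neg hk, add_zero, add_zero]
      simp only [map_add, map_mul, map_zero]
      ring
  have hU : (∑' k : ℤ, usum f g α β k)
      = Sg g (α - β) + conj lam * c * conj (cf g (β - α)) := by
    calc (∑' k : ℤ, usum f g α β k)
        = ∑' k : ℤ, (cf g (α - k) * conj (cf g (β - k))
            + (if k = α then conj lam * c * conj (cf g (β - α)) else 0)) := tsum_congr hu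
      _ = (∑' k : ℤ, cf g (α - k) * conj (cf g (β - k)))
            + ∑' k : ℤ, (if k = α then conj lam * c * conj (cf g (β - α)) else 0) :=
          Summable.tsum_add (summable_RbS g α β) (summable_single α _)
      _ = Sg g (α - β) + conj lam * c * conj (cf g (β - α)) := by
          rw [reindex_RbS, tsum_ite_eq]
  have hV : (∑' k : ℤ, vsum f g α β k)
      = conj lam * Sg g (α - β) + conj c * cf g (α - β) := by
    calc (∑' k : ℤ, vsum f g α β k)
        = ∑' k : ℤ, (conj lam * (conj (cf g (k - α)) * cf g (k - β))
            + (if k = α then conj c * cf g (α - β) else 0)) := tsum_congr hv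
      _ = (∑' k : ℤ, conj lam * (conj (cf g (k - α)) * cf g (k - β)))
            + ∑' k : ℤ, (if k = α then conj c * cf g (α - β) else 0) :=
          Summable.tsum_add ((summable_RX3 g α β).mul_left (conj lam)) (summable_single α _)
      _ = conj lam * Sg g (α - β) + conj c * cf g (α - β) := by
          rw [tsum_mul_left, reindex_RX3, tsum_ite_eq]
  rw [hU, hV, KeyId hlam hrel (α - β)]
  have e : -(α - β) = β - α := by ring
  rw [e]
  linear_combination (conj c * cf g (α - β) - Sg g (α - β)) * hlam

lemma B1block (hlam : conj lam * lam = 1)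
    (hrel : ∀ k : ℤ, cf f k = lam * cf g k + (if k = 0 then c else 0))
    {α β : ℤ} (hα : 0 ≤ α) (hβ : 0 ≤ β) :
    (∑' k : ℤ, usum f g α β k) = ∑' k : ℤ, vsum f g α β k := by
  have hu : ∀ k : ℤ, usum f g α β k
      = cf g (α - k) * conj (cf g (β - k))
        + ((if k = β then lam * conj c * cf g (α - β) else 0)
        + ((if k = α then conj lam * c * conj (cf g (β - α)) else 0)
        + (if k = α then (if α = β then c * conj c else 0) else 0))) := by
    intro k
    rcases le_or_gt 0 k with h | h
    · rcases eq_or_ne k α with hkα | hkα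
      · rcases eq_or_ne k β with hkβ | hkβ
        · -- k = α, k = β, so α = β
          have hab : α = β := by omega
          subst hab
          subst hkα
          unfold usum
          rw [if_pos h, if_pos rfl, if_pos rfl, if_pos rfl]
          rw [hrel (k - k), if_pos (by omega : k - k = 0)]
          simp only [map_add, map_mul, map_zero, add_zero, eq_self_iff_true, if_true]
          linear_combination (cf g (k - k) * conj (cf g (k - k))) * hlam
        · subst hkα
          unfold usum
          rw [if_pos h, if_neg hkβ, if_pos rfl, if_pos rfl,
            if_neg (by omega : ¬(k = β))]
          rw [hrel (k - k), hrel (β - k), if_pos (by omega : k - k = 0),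
            if_neg (by omega : ¬(β - k = 0)), add_zero]
          simp only [map_add, map_mul, map_zero, add_zero, eq_self_iff_true, if_true]
          linear_combination (cf g (k - k) * conj (cf g (β - k))) * hlam
      · rcases eq_or_ne k β with hkβ | hkβ
        · subst hkβ
          unfold usum
          rw [if_pos h, if_pos rfl, if_neg hkα, if_neg hkα]
          rw [hrel (α - k), hrel (k - k), if_neg (by omega : ¬(α - k = 0)),
            if_pos (by omega : k - k = 0), add_zero]
          simp only [map_add, map_mul, map_zero, add_zero, eq_self_iff_true, if_true]
          linear_combination (cf g (α - k) * conj (cf g (k - k))) * hlam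
        · unfold usum
          rw [if_pos h, if_neg hkβ, if_neg hkα, if_neg hkα]
          rw [hrel (α - k), hrel (β - k), if_neg (by omega : ¬(α - k = 0)),
            if_neg (by omega : ¬(β - k = 0)), add_zero, add_zero]
          simp only [map_add, map_mul, map_zero, add_zero]
          linear_combination (cf g (α - k) * conj (cf g (β - k))) * hlam
    · unfold usum
      rw [if_neg (by omega : ¬(0:ℤ) ≤ k), if_neg (by omega : ¬(k = β)),
        if_neg (by omega : ¬(k = α)), if_neg (by omega : ¬(k = α))]
      ring
  have hv : ∀ k : ℤ, vsum f g α β k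
      = conj (cf g (k - α)) * cf g (k - β)
        + ((if k = β then conj lam * c * conj (cf g (β - α)) else 0)
        + ((if k = α then lam * conj c * cf g (α - β) else 0)
        + (if k = α then (if α = β then c * conj c else 0) else 0))) := by
    intro k
    unfold vsum
    rw [if_pos hα, if_pos hβ]
    rcases eq_or_ne k α with hkα | hkα
    · rcases eq_or_ne k β with hkβ | hkβ
      · have hab : α = β := by omega
        subst hab
        subst hkα
        rw [hrel (k - k), if_pos (by omega : k - k = 0), if_pos rfl, if_pos rfl, if_pos rfl]
        simp only [map_add, map_mul, map_zero, add_zero, eq_self_iff_true, if_true]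
        linear_combination (conj (cf g (k - k)) * cf g (k - k)) * hlam
      · subst hkα
        rw [hrel (k - k), hrel (k - β), if_pos (by omega : k - k = 0),
          if_neg (by omega : ¬(k - β = 0)), if_neg hkβ, if_pos rfl, if_pos rfl,
          if_neg (by omega : ¬(k = β))]
        simp only [map_add, map_mul, map_zero, add_zero, eq_self_iff_true, if_true]
        linear_combination (conj (cf g (k - k)) * cf g (k - β)) * hlam
    · rcases eq_or_ne k β with hkβ | hkβ
      · subst hkβ
        rw [hrel (k - α), hrel (k - k), if_neg (by omega : ¬(k - α = 0)),
          if_pos (by omega : k - k = 0), if_pos rfl, if_neg hkα, if_neg hkα]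
        simp only [map_add, map_mul, map_zero, add_zero, eq_self_iff_true, if_true]
        linear_combination (conj (cf g (k - α)) * cf g (k - k)) * hlam
      · rw [hrel (k - α), hrel (k - β), if_neg (by omega : ¬(k - α = 0)),
          if_neg (by omega : ¬(k - β = 0)), if_neg hkβ, if_neg hkα, if_neg hkα,
          add_zero, add_zero]
        simp only [map_add, map_mul, map_zero, add_zero]
        linear_combination (conj (cf g (k - α)) * cf g (k - β)) * hlam
  have hU : (∑' k : ℤ, usum f g α β k)
      = Sg g (α - β) + (lam * conj c * cf g (α - β)
        + (conj lam * c * conj (cf g (β - α)) + (if α = β then c * conj c else 0))) := by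
    calc (∑' k : ℤ, usum f g α β k)
        = ∑' k : ℤ, (cf g (α - k) * conj (cf g (β - k))
            + ((if k = β then lam * conj c * cf g (α - β) else 0)
            + ((if k = α then conj lam * c * conj (cf g (β - α)) else 0)
            + (if k = α then (if α = β then c * conj c else 0) else 0)))) := tsum_congr hu
      _ = (∑' k : ℤ, cf g (α - k) * conj (cf g (β - k)))
            + ∑' k : ℤ, ((if k = β then lam * conj c * cf g (α - β) else 0)
            + ((if k = α then conj lam * c * conj (cf g (β - α)) else 0)
            + (if k = α then (if α = β then c * conj c else 0) else 0))) :=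
          Summable.tsum_add (summable_RbS g α β)
            ((summable_single β _).add ((summable_single α _).add (summable_single α _)))
      _ = Sg g (α - β) + (lam * conj c * cf g (α - β)
            + (conj lam * c * conj (cf g (β - α)) + (if α = β then c * conj c else 0))) := by
          rw [reindex_RbS,
            Summable.tsum_add (summable_single β _) ((summable_single α _).add (summable_single α _)),
            Summable.tsum_add (summable_single α _) (summable_single α _),
            tsum_ite_eq β (fun _ => lam * conj c * cf g (α - β)),
            tsum_ite_eq α (fun _ => conj lam * c * conj (cf g (β - α))),
            tsum_ite_eq α (fun _ => if α = β then c * conj c else 0)]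
  have hV : (∑' k : ℤ, vsum f g α β k)
      = Sg g (α - β) + (conj lam * c * conj (cf g (β - α))
        + (lam * conj c * cf g (α - β) + (if α = β then c * conj c else 0))) := by
    calc (∑' k : ℤ, vsum f g α β k)
        = ∑' k : ℤ, (conj (cf g (k - α)) * cf g (k - β)
            + ((if k = β then conj lam * c * conj (cf g (β - α)) else 0)
            + ((if k = α then lam * conj c * cf g (α - β) else 0)
            + (if k = α then (if α = β then c * conj c else 0) else 0)))) := tsum_congr hv
      _ = (∑' k : ℤ, conj (cf g (k - α)) * cf g (k - β))
            + ∑' k : ℤ, ((if k = β then conj lam * c * conj (cf g (β - α)) else 0)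
            + ((if k = α then lam * conj c * cf g (α - β) else 0)
            + (if k = α then (if α = β then c * conj c else 0) else 0))) :=
          Summable.tsum_add (summable_RX3 g α β)
            ((summable_single β _).add ((summable_single α _).add (summable_single α _)))
      _ = Sg g (α - β) + (conj lam * c * conj (cf g (β - α))
            + (lam * conj c * cf g (α - β) + (if α = β then c * conj c else 0))) := by
          rw [reindex_RX3,
            Summable.tsum_add (summable_single β _) ((summable_single α _).add (summable_single α _)),
            Summable.tsum_add (summable_single α _) (summable_single α _),
            tsum_ite_eq β (fun _ => conj lam * c * conj (cf g (β - α))),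
            tsum_ite_eq α (fun _ => lam * conj c * cf g (α - β)),
            tsum_ite_eq α (fun _ => if α = β then c * conj c else 0)]
  rw [hU, hV]
  ring

end Infra11

section Infra12

local notation "⟪" x ", " y "⟫" => @inner ℂ _ _ x y

variable {f g : Linf} {lam c : ℂ}

lemma unimod {lam : ℂ} (h : ‖lam‖ = 1) : conj lam * lam = 1 := by
  have h1 := Complex.mul_conj lam
  have h2 : Complex.normSq lam = 1 := by
    rw [Complex.normSq_eq_norm_sq, h]
    norm_num
  rw [mul_comm, h1, h2]
  norm_num

lemma conjInf_Dl (hlam : conj lam * lam = 1) :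
    conjInf (lam • (conjInf f ⊙ g) - f ⊙ conjInf g)
      = (-(conj lam)) • (lam • (conjInf f ⊙ g) - f ⊙ conjInf g) := by
  apply Lp.ext
  filter_upwards [coeFn_conjInf (lam • (conjInf f ⊙ g) - f ⊙ conjInf g),
    Lp.coeFn_sub (lam • (conjInf f ⊙ g)) (f ⊙ conjInf g),
    Lp.coeFn_smul lam (conjInf f ⊙ g),
    coeFn_mulInf (conjInf f) g, coeFn_mulInf f (conjInf g),
    coeFn_conjInf f, coeFn_conjInf g,
    Lp.coeFn_smul (-(conj lam)) (lam • (conjInf f ⊙ g) - f ⊙ conjInf g)]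
    with t h1 h2 h3 h4 h5 h6 h7 h8
  rw [h1, h8, Pi.smul_apply, h2, Pi.sub_apply, h3, Pi.smul_apply, h4, h5, h6, h7]
  simp only [smul_eq_mul, map_sub, map_mul, Complex.conj_conj]
  linear_combination (conj ((f : Circ → ℂ) t) * (g : Circ → ℂ) t) * hlam

lemma d_pos_coeffs (hlam : conj lam * lam = 1)
    (hneg : ∀ s : ℤ, s < 0 → cf (lam • (conjInf f ⊙ g) - f ⊙ conjInf g) s = 0) :
    ∀ k : ℤ, k ≠ 0 → cf (lam • (conjInf f ⊙ g) - f ⊙ conjInf g) k = 0 := by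
  intro k hk
  rcases lt_trichotomy k 0 with h | h | h
  · exact hneg k h
  · exact absurd h hk
  · have h1 : cf (conjInf (lam • (conjInf f ⊙ g) - f ⊙ conjInf g)) k
        = conj (cf (lam • (conjInf f ⊙ g) - f ⊙ conjInf g) (-k)) := cf_conjInf _ k
    rw [hneg (-k) (by omega), map_zero] at h1
    rw [conjInf_Dl hlam] at h1
    rw [cf_smul] at h1
    have hlne : conj lam ≠ 0 := by
      intro hz
      rw [hz, zero_mul] at hlam
      exact zero_ne_one hlam
    rcases mul_eq_zero.mp h1 with h2 | h2
    · exact absurd (neg_eq_zero.mp h2) hlne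
    · exact h2

/-- Necessity. -/
lemma necessity
    (hN : Sop f g ∘L ContinuousLinearMap.adjoint (Sop f g) =
      ContinuousLinearMap.adjoint (Sop f g) ∘L Sop f g) :
    (IsConst f ∧ IsConst g) ∨
      (∃ lam : ℂ, ‖lam‖ = 1 ∧ IsConst (f - lam • g) ∧
        IsConst (lam • (conjInf f ⊙ g) - f ⊙ conjInf g)) := by
  obtain ⟨lam₁, hl1, hR1⟩ := R1 hN
  obtain ⟨mu, hl2, hR2⟩ := R2 hN
  by_cases hg : ∀ k : ℤ, k ≠ 0 → cf g k = 0
  · left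
    constructor
    · rw [isConst_iff]
      intro k hk
      rcases lt_trichotomy k 0 with h | h | h
      · rw [hR1 k h, hg k hk, mul_zero]
      · exact absurd h hk
      · rw [hR2 k h, hg k hk, mul_zero]
    · exact (isConst_iff g).mpr hg
  · right
    push_neg at hg
    obtain ⟨k₀, hk₀ne, hk₀⟩ := hg
    -- produce lam with the full relation
    have hmain : ∃ lam : ℂ, ‖lam‖ = 1 ∧ ∀ k : ℤ, k ≠ 0 → cf f k = lam * cf g k := by
      rcases lt_trichotomy k₀ 0 with h | h | h
      · refine ⟨lam₁, hl1, fun k hk => ?_⟩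
        have hlam₁ := unimod hl1
        rcases lt_trichotomy k 0 with hc | hc | hc
        · exact hR1 k hc
        · exact absurd hc hk
        · have h3 := R3 hN h hc
          rw [hR1 k₀ h] at h3
          have h4 : lam₁ * conj (cf f k) = conj (cf g k) := by
            apply mul_left_cancel₀ hk₀
            linear_combination h3
          have h5 := congrArg (starRingEnd ℂ) h4
          simp only [map_mul, Complex.conj_conj] at h5
          linear_combination lam₁ * h5 - (cf f k) * hlam₁
      · exact absurd h hk₀ne
      · refine ⟨mu, hl2, fun k hk => ?_⟩
        have hlam₂ := unimod hl2
        rcases lt_trichotomy k 0 with hc | hc | hc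
        · have h3 := R3 hN hc h
          have h6 := hR2 k₀ h
          rw [h6] at h3
          have h4 : cf f k * conj mu = cf g k := by
            apply mul_right_cancel₀ (b := conj (cf g k₀)) (by simpa using hk₀)
            simp only [map_mul] at h3
            linear_combination h3
          linear_combination mu * h4 - (cf f k) * hlam₂
        · exact absurd hc hk
        · exact hR2 k hc
    obtain ⟨lam, hl, hall⟩ := hmain
    have hlam := unimod hl
    refine ⟨lam, hl, ?_, ?_⟩
    · rw [isConst_iff]
      intro k hk
      rw [cf_sub, cf_smul, hall k hk, sub_self]
    · set c : ℂ := cf f 0 - lam * cf g 0 with hc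
      have hrel : ∀ k : ℤ, cf f k = lam * cf g k + (if k = 0 then c else 0) := by
        intro k
        rcases eq_or_ne k 0 with hk | hk
        · subst hk
          rw [if_pos rfl, hc]
          ring
        · rw [if_neg hk, add_zero]
          exact hall k hk
      have hneg : ∀ s : ℤ, s < 0 →
          cf (lam • (conjInf f ⊙ g) - f ⊙ conjInf g) s = 0 := by
        intro s hs
        have hB := B3block hlam hrel (α := s) (β := 0) hs le_rfl
        have hEq := (normal_iff_entries f g).mp hN s 0
        rw [hEq, sub_self] at hB
        have e : s - 0 = s := by ring
        rw [e] at hB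
        exact hB.symm
      rw [isConst_iff]
      exact d_pos_coeffs hlam hneg

/-- Sufficiency. -/
lemma sufficiency
    (hOr : (IsConst f ∧ IsConst g) ∨
      (∃ lam : ℂ, ‖lam‖ = 1 ∧ IsConst (f - lam • g) ∧
        IsConst (lam • (conjInf f ⊙ g) - f ⊙ conjInf g))) :
    Sop f g ∘L ContinuousLinearMap.adjoint (Sop f g) =
      ContinuousLinearMap.adjoint (Sop f g) ∘L Sop f g := by
  have hmain : ∃ (lam c : ℂ), conj lam * lam = 1
      ∧ (∀ k : ℤ, cf f k = lam * cf g k + (if k = 0 then c else 0))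
      ∧ (∀ k : ℤ, k ≠ 0 → cf (lam • (conjInf f ⊙ g) - f ⊙ conjInf g) k = 0) := by
    rcases hOr with ⟨hf, hg⟩ | ⟨lam, hl, hc1, hc2⟩
    · have hf' := (isConst_iff f).mp hf
      have hg' := (isConst_iff g).mp hg
      refine ⟨1, cf f 0 - cf g 0, by simp, fun k => ?_, fun k hk => ?_⟩
      · rcases eq_or_ne k 0 with hk | hk
        · subst hk; rw [if_pos rfl]; ring
        · rw [if_neg hk, hf' k hk, hg' k hk, add_zero, mul_zero]
      · have hrel1 : ∀ j : ℤ, cf f j = (1:ℂ) * cf g j + (if j = 0 then cf f 0 - cf g 0 else 0) := by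
          intro j
          rcases eq_or_ne j 0 with hj | hj
          · subst hj; rw [if_pos rfl]; ring
          · rw [if_neg hj, hf' j hj, hg' j hj, add_zero, mul_zero]
        rw [KeyId (by simp) hrel1 k, hg' k hk, hg' (-k) (by omega)]
        simp
    · refine ⟨lam, cf f 0 - lam * cf g 0, unimod hl, fun k => ?_, (isConst_iff _).mp hc2⟩
      rcases eq_or_ne k 0 with hk | hk
      · subst hk; rw [if_pos rfl]; ring
      · rw [if_neg hk, add_zero]
        have := (isConst_iff _).mp hc1 k hk
        rw [cf_sub, cf_smul] at this
        linear_combination this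
  obtain ⟨lam, c, hlam, hrel, hd⟩ := hmain
  rw [normal_iff_entries]
  intro α β
  rcases le_or_gt 0 α with hα | hα
  · rcases le_or_gt 0 β with hβ | hβ
    · exact B1block hlam hrel hα hβ
    · have hB := B4block hlam hrel hα hβ
      rw [hd (α - β) (by omega), mul_zero] at hB
      exact sub_eq_zero.mp hB
  · rcases le_or_gt 0 β with hβ | hβ
    · have hB := B3block hlam hrel hα hβ
      rw [hd (α - β) (by omega)] at hB
      exact sub_eq_zero.mp hB
    · exact B2block hlam hrel hα hβ

end Infra12
/-- `S_{f,g}` is normal iff `f` and `g` are constants or there is a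
unimodular constant `λ` such that `f − λg` and `λ·conj(f)·g − f·conj(g)` are constants. -/
theorem statement17 (f g : Linf) :
    Sop f g ∘L ContinuousLinearMap.adjoint (Sop f g) =
        ContinuousLinearMap.adjoint (Sop f g) ∘L Sop f g ↔
      (IsConst f ∧ IsConst g) ∨
        (∃ lam : ℂ, ‖lam‖ = 1 ∧ IsConst (f - lam • g) ∧
          IsConst (lam • (conjInf f ⊙ g) - f ⊙ conjInf g)) := by
  exact ⟨necessity, sufficiency⟩
end GSIO
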